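/- Let X₁, X₂, W₁, W₂ be nonzero vectors in ℝ^m, let K ≥ 0 and r > 0, and suppose that for i = 1, 2 one has ‖X_i − W_i‖ ≤ K‖W_i‖² and ‖W_i‖ ≤ r. Writing X̂ = X/‖X‖ and Ŵ = W/‖W‖ for the corresponding unit vectors, |⟨X̂₁, X̂₂⟩ − ⟨Ŵ₁, Ŵ₂⟩| ≤ 4Kr. -/

import Mathlib

open scoped RealInnerProductSpace

lemma normalize_sub_normalize_le {E : Type*} [NormedAddCommGroup E]
    [InnerProductSpace ℝ E] {x w : E} (hx : x ≠ 0) (hw : w ≠ 0) :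
    ‖‖x‖⁻¹ • x - ‖w‖⁻¹ • w‖ ≤ 2 * ‖x - w‖ / ‖w‖ := by
  have ha : (0:ℝ) < ‖x‖ := norm_pos_iff.mpr hx
  have hb : (0:ℝ) < ‖w‖ := norm_pos_iff.mpr hw
  have key : ‖x‖⁻¹ • x - ‖w‖⁻¹ • w
      = ‖w‖⁻¹ • (x - w) + (‖x‖⁻¹ - ‖w‖⁻¹) • x := by
    rw [smul_sub, sub_smul]; abel
  have hd : |‖w‖ - ‖x‖| ≤ ‖x - w‖ := by
    rw [abs_sub_comm]
    simpa using abs_norm_sub_norm_le x w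
  have h2 : ‖(‖x‖⁻¹ - ‖w‖⁻¹) • x‖ = |‖w‖ - ‖x‖| / ‖w‖ := by
    rw [norm_smul, Real.norm_eq_abs]
    have : |‖x‖⁻¹ - ‖w‖⁻¹| * ‖x‖ = |(‖x‖⁻¹ - ‖w‖⁻¹) * ‖x‖| := by
      rw [abs_mul, abs_of_nonneg (norm_nonneg x)]
    rw [this]
    have heq : (‖x‖⁻¹ - ‖w‖⁻¹) * ‖x‖ = (‖w‖ - ‖x‖) / ‖w‖ := by
      field_simp
    rw [heq, abs_div, abs_of_pos hb]
  calc ‖‖x‖⁻¹ • x - ‖w‖⁻¹ • w‖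
      ≤ ‖‖w‖⁻¹ • (x - w)‖ + ‖(‖x‖⁻¹ - ‖w‖⁻¹) • x‖ := by rw [key]; exact norm_add_le _ _
    _ = ‖x - w‖ / ‖w‖ + |‖w‖ - ‖x‖| / ‖w‖ := by
        rw [h2, norm_smul, Real.norm_eq_abs, abs_of_pos (inv_pos.mpr hb),
          inv_mul_eq_div]
    _ ≤ ‖x - w‖ / ‖w‖ + ‖x - w‖ / ‖w‖ := by
        gcongr
    _ = 2 * ‖x - w‖ / ‖w‖ := by ring

/-- **Closeness of cosines of angles after projection.**
If `X₁, X₂, W₁, W₂` are nonzero vectors of `ℝ^m` with `‖Xᵢ − Wᵢ‖ ≤ K‖Wᵢ‖²` and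
`‖Wᵢ‖ ≤ r` for `i = 1, 2` (where `K ≥ 0`, `r > 0`), then the inner products of the
normalized vectors satisfy `|⟨X̂₁, X̂₂⟩ − ⟨Ŵ₁, Ŵ₂⟩| ≤ 4Kr`. -/
theorem abs_inner_normalize_sub_inner_normalize_le {m : ℕ}
    {X₁ X₂ W₁ W₂ : EuclideanSpace ℝ (Fin m)}
    (hX₁ : X₁ ≠ 0) (hX₂ : X₂ ≠ 0) (hW₁ : W₁ ≠ 0) (hW₂ : W₂ ≠ 0)
    {K r : ℝ} (hK : 0 ≤ K) (hr : 0 < r)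
    (h₁ : ‖X₁ - W₁‖ ≤ K * ‖W₁‖ ^ 2) (h₂ : ‖X₂ - W₂‖ ≤ K * ‖W₂‖ ^ 2)
    (hr₁ : ‖W₁‖ ≤ r) (hr₂ : ‖W₂‖ ≤ r) :
    |⟪‖X₁‖⁻¹ • X₁, ‖X₂‖⁻¹ • X₂⟫ - ⟪‖W₁‖⁻¹ • W₁, ‖W₂‖⁻¹ • W₂⟫| ≤ 4 * K * r := by
  set a := ‖X₁‖⁻¹ • X₁
  set b := ‖X₂‖⁻¹ • X₂
  set c := ‖W₁‖⁻¹ • W₁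
  set d := ‖W₂‖⁻¹ • W₂
  have hW₁' : (0:ℝ) < ‖W₁‖ := norm_pos_iff.mpr hW₁
  have hW₂' : (0:ℝ) < ‖W₂‖ := norm_pos_iff.mpr hW₂
  have hnb : ‖b‖ = 1 := by
    simp [b, norm_smul, abs_of_pos (inv_pos.mpr (norm_pos_iff.mpr hX₂)),
      inv_mul_cancel₀ (norm_ne_zero_iff.mpr hX₂)]
  have hnc : ‖c‖ = 1 := by
    simp [c, norm_smul, abs_of_pos (inv_pos.mpr hW₁'),
      inv_mul_cancel₀ (norm_ne_zero_iff.mpr hW₁)]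
  have hac : ‖a - c‖ ≤ 2 * K * r := by
    calc ‖a - c‖ ≤ 2 * ‖X₁ - W₁‖ / ‖W₁‖ := normalize_sub_normalize_le hX₁ hW₁
      _ ≤ 2 * (K * ‖W₁‖ ^ 2) / ‖W₁‖ := by gcongr
      _ = 2 * K * ‖W₁‖ := by field_simp
      _ ≤ 2 * K * r := by nlinarith
  have hbd : ‖b - d‖ ≤ 2 * K * r := by
    calc ‖b - d‖ ≤ 2 * ‖X₂ - W₂‖ / ‖W₂‖ := normalize_sub_normalize_le hX₂ hW₂
      _ ≤ 2 * (K * ‖W₂‖ ^ 2) / ‖W₂‖ := by gcongr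
      _ = 2 * K * ‖W₂‖ := by field_simp
      _ ≤ 2 * K * r := by nlinarith
  have split : ⟪a, b⟫ - ⟪c, d⟫ = ⟪a - c, b⟫ + ⟪c, b - d⟫ := by
    rw [inner_sub_left, inner_sub_right]; ring
  calc |⟪a, b⟫ - ⟪c, d⟫| ≤ |⟪a - c, b⟫| + |⟪c, b - d⟫| := by
        rw [split]; exact abs_add_le _ _
    _ ≤ ‖a - c‖ * ‖b‖ + ‖c‖ * ‖b - d‖ := by
        gcongr <;> exact abs_real_inner_le_norm _ _
    _ = ‖a - c‖ + ‖b - d‖ := by rw [hnb, hnc]; ring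
    _ ≤ 2 * K * r + 2 * K * r := add_le_add hac hbd
    _ = 4 * K * r := by ring
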